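/- Let A_1,…,A_K (K ≥ 1) be n×n complex matrices that are unitary, skew-Hermitian, and pairwise anticommuting, and let P be an n×n Hermitian unitary matrix anticommuting with every A_i (PA_i = −A_iP). Set A_{iI} = A_i and A_{iQ} = P·A_i, and define the normalized matrices Ã_{iI} = A_{1I}ᴴ A_{iI} and Ã_{iQ} = A_{1I}ᴴ A_{iQ}. Then the normalized family satisfies the CUW conditions: Ã_{1I} = I_n; Ã_{iI}ᴴ = −Ã_{iI} for 2 ≤ i ≤ K; Ã_{iI}Ã_{jI} = −Ã_{jI}Ã_{iI} for 2 ≤ i ≠ j ≤ K; Ã_{1Q}ᴴ = Ã_{1Q}; Ã_{iQ} = Ã_{1Q}Ã_{iI} for 2 ≤ i ≤ K; and Ã_{1Q}Ã_{jI} = Ã_{jI}Ã_{1Q} for 1 ≤ j ≤ K. That is, a normalized Minkowski-Clifford UW-SSD code is a Clifford UW-SSD code. -/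

import Mathlib

open Matrix

/-- The CUW conditions on a family of weight-matrix pairs (index `⟨0,hK⟩`
plays the role of the index `1` of the paper). -/
def CUWConds {n K : ℕ} (hK : 0 < K) (AI AQ : Fin K → Matrix (Fin n) (Fin n) ℂ) : Prop :=
  AI ⟨0, hK⟩ = 1 ∧
  (∀ i : Fin K, i ≠ ⟨0, hK⟩ → (AI i)ᴴ = -(AI i)) ∧
  (∀ i j : Fin K, i ≠ ⟨0, hK⟩ → j ≠ ⟨0, hK⟩ → i ≠ j → AI i * AI j = -(AI j * AI i)) ∧
  (AQ ⟨0, hK⟩)ᴴ = AQ ⟨0, hK⟩ ∧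
  (∀ i : Fin K, i ≠ ⟨0, hK⟩ → AQ i = AQ ⟨0, hK⟩ * AI i) ∧
  (∀ j : Fin K, AQ ⟨0, hK⟩ * AI j = AI j * AQ ⟨0, hK⟩)

/-- A normalized Minkowski-Clifford UW-SSD family satisfies the CUW
conditions: normalizing the weight matrices `A_{iI} = A_i`, `A_{iQ} = P A_i`
(with `A_i` unitary skew-Hermitian pairwise anticommuting, `P` Hermitian
unitary anticommuting with the `A_i`s) yields a Clifford UW-SSD code. -/
theorem normalized_mcuw_is_cuw {n K : ℕ} (hK : 0 < K)
    (A : Fin K → Matrix (Fin n) (Fin n) ℂ)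
    (hAu : ∀ i, (A i)ᴴ * A i = 1)
    (hAs : ∀ i, (A i)ᴴ = -(A i))
    (hAa : ∀ i j, i ≠ j → A i * A j = -(A j * A i))
    (P : Matrix (Fin n) (Fin n) ℂ)
    (hPh : Pᴴ = P) (hPu : Pᴴ * P = 1)
    (hPa : ∀ i, P * A i = -(A i * P)) :
    CUWConds hK
      (fun i => (A ⟨0, hK⟩)ᴴ * A i)
      (fun i => (A ⟨0, hK⟩)ᴴ * (P * A i)) := by
  set i0 : Fin K := ⟨0, hK⟩ with hi0
  have h0s : (A i0)ᴴ = -(A i0) := hAs i0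
  have h0u : (A i0)ᴴ * A i0 = 1 := hAu i0
  have h0u' : A i0 * (A i0)ᴴ = 1 := mul_eq_one_comm.mp h0u
  have hc : ∀ i, i ≠ i0 → A i * (A i0)ᴴ = -((A i0)ᴴ * A i) := by
    intro i hi
    rw [h0s, mul_neg, neg_mul, neg_neg, hAa i i0 hi, neg_neg]
  refine ⟨h0u, ?_, ?_, ?_, ?_, ?_⟩
  · intro i hi
    simp only [conjTranspose_mul, conjTranspose_conjTranspose, hAs i,
      neg_mul, neg_neg]
    rw [hAa i i0 hi, neg_neg, h0s, neg_mul, neg_neg]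
  · intro i j hi hj hij
    simp only [Matrix.mul_assoc]
    rw [← Matrix.mul_assoc (A i), hc i hi, ← Matrix.mul_assoc (A j), hc j hj]
    simp only [neg_mul, mul_neg, neg_neg, Matrix.mul_assoc]
    rw [hAa i j hij]
    simp [Matrix.mul_assoc]
  · simp only [conjTranspose_mul, conjTranspose_conjTranspose, hPh,
      Matrix.mul_assoc]
    rfl
  · intro i hi
    simp only [Matrix.mul_assoc]
    rw [← Matrix.mul_assoc (A i0), h0u', one_mul]
  · intro j
    by_cases hj : j = i0
    · subst hj
      simp only [Matrix.mul_assoc]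
      rw [← Matrix.mul_assoc (A i0) (A i0)ᴴ, h0u', one_mul,
        ← Matrix.mul_assoc (A i0)ᴴ (A i0), h0u, one_mul]
    · have hjP : A j * P = -(P * A j) := by rw [hPa j, neg_neg]
      have h0P : A i0 * P = -(P * A i0) := by rw [hPa i0, neg_neg]
      have hsq : A i0 * A i0 = -1 := by
        have h := h0u
        rw [h0s, neg_mul] at h
        rw [← neg_neg (A i0 * A i0), h]
      have lhs : (A i0)ᴴ * (P * A i0) * ((A i0)ᴴ * A j)
          = P * (A i0 * A j) := by
        simp only [Matrix.mul_assoc]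
        rw [← Matrix.mul_assoc (A i0) (A i0)ᴴ, h0u', one_mul, h0s]
        simp only [neg_mul]
        rw [← Matrix.mul_assoc, h0P]
        simp only [neg_mul, neg_neg, Matrix.mul_assoc]
      have rhs : (A i0)ᴴ * A j * ((A i0)ᴴ * (P * A i0))
          = P * (A i0 * A j) := by
        simp only [h0s, neg_mul, mul_neg, neg_neg, Matrix.mul_assoc]
        rw [← Matrix.mul_assoc (A i0) P (A i0), h0P]
        simp only [neg_mul, mul_neg, neg_neg, Matrix.mul_assoc]
        rw [hsq]
        simp only [mul_neg_one, mul_neg, neg_neg, mul_one]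
        rw [hjP]
        simp only [mul_neg]
        rw [← Matrix.mul_assoc (A i0) P, h0P]
        simp only [neg_mul, neg_neg, Matrix.mul_assoc]
      simp only [Matrix.mul_assoc] at lhs rhs ⊢
      rw [lhs, rhs]
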